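/- arXiv:0805.0869 — 3 statements merged into one kernel-verified Lean document; each statement's English description precedes it below -/
import Mathlib

section
/- Let U_t ∈ SU(2) solve the stochastic Schrödinger equation i dU_t = H(t)U_t dt, and write U_t = u(χ_t, φ_t, ψ_t) in the given parametrisation of SU(2). Then U_t solves this equation if and only if the coordinates satisfy the system dχ_t = κ[X_t sin φ_t + Y_t cos φ_t] dt, dφ_t = (1 + (2κ/tan 2χ_t)[X_t cos φ_t − Y_t sin φ_t]) dt, dψ_t = −(κ/sin 2χ_t)[X_t cos φ_t − Y_t sin φ_t] dt. -/
open Real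

noncomputable section

/-- The parametrisation `u(χ,φ,ψ)` of `SU(2)`. -/
def uMat (χ φ ψ : ℝ) : Matrix (Fin 2) (Fin 2) ℂ :=
  !![(Real.cos χ : ℂ) * Complex.exp (-Complex.I * ((φ : ℂ) / 2 + (ψ : ℂ))),
     (Real.sin χ : ℂ) * Complex.exp (-Complex.I * ((φ : ℂ) / 2 - (ψ : ℂ)));
     -(Real.sin χ : ℂ) * Complex.exp (Complex.I * ((φ : ℂ) / 2 - (ψ : ℂ))),
     (Real.cos χ : ℂ) * Complex.exp (Complex.I * ((φ : ℂ) / 2 + (ψ : ℂ)))]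

/-- The Hamiltonian `H = H₀ + κV` with `H₀ = diag(1/2, −1/2)` and
`V` off-diagonal with entries `Z = X + iY` and `conj Z`. -/
def Hmat (κ X Y : ℝ) : Matrix (Fin 2) (Fin 2) ℂ :=
  !![(1 : ℂ) / 2, (κ : ℂ) * ((X : ℂ) + Complex.I * (Y : ℂ));
     (κ : ℂ) * ((X : ℂ) - Complex.I * (Y : ℂ)), -((1 : ℂ) / 2)]

/-- Chain-rule derivative of the entries of `uMat`. -/
def uD (χ0 φ0 ψ0 a b c : ℝ) : Matrix (Fin 2) (Fin 2) ℂ :=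
  !![(-Real.sin χ0 * a : ℂ) * Complex.exp (-Complex.I * ((φ0 : ℂ) / 2 + ψ0)) +
       (Real.cos χ0 : ℂ) * (Complex.exp (-Complex.I * ((φ0 : ℂ) / 2 + ψ0)) * (-Complex.I * ((b : ℂ) / 2 + c))),
     (Real.cos χ0 * a : ℂ) * Complex.exp (-Complex.I * ((φ0 : ℂ) / 2 - ψ0)) +
       (Real.sin χ0 : ℂ) * (Complex.exp (-Complex.I * ((φ0 : ℂ) / 2 - ψ0)) * (-Complex.I * ((b : ℂ) / 2 - c)));
     (-(Real.cos χ0 * a) : ℂ) * Complex.exp (Complex.I * ((φ0 : ℂ) / 2 - ψ0)) +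
       (-(Real.sin χ0) : ℂ) * (Complex.exp (Complex.I * ((φ0 : ℂ) / 2 - ψ0)) * (Complex.I * ((b : ℂ) / 2 - c))),
     (-Real.sin χ0 * a : ℂ) * Complex.exp (Complex.I * ((φ0 : ℂ) / 2 + ψ0)) +
       (Real.cos χ0 : ℂ) * (Complex.exp (Complex.I * ((φ0 : ℂ) / 2 + ψ0)) * (Complex.I * ((b : ℂ) / 2 + c)))]

lemma uMat_hasDerivAt (χ φp ψp : ℝ → ℝ) (a b c t : ℝ)
    (hχ : HasDerivAt χ a t) (hφ : HasDerivAt φp b t) (hψ : HasDerivAt ψp c t) (i j : Fin 2) :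
    HasDerivAt (fun s => uMat (χ s) (φp s) (ψp s) i j)
      (uD (χ t) (φp t) (ψp t) a b c i j) t := by
  have hcos : HasDerivAt (fun s => (Real.cos (χ s) : ℂ)) ((-Real.sin (χ t) * a : ℝ) : ℂ) t :=
    (hχ.cos).ofReal_comp
  have hsin : HasDerivAt (fun s => (Real.sin (χ s) : ℂ)) ((Real.cos (χ t) * a : ℝ) : ℂ) t :=
    (hχ.sin).ofReal_comp
  have hnsin : HasDerivAt (fun s => (-(Real.sin (χ s)) : ℂ)) ((-(Real.cos (χ t) * a) : ℝ) : ℂ) t := by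
    have := hsin.neg
    exact this.congr_deriv (by push_cast; ring)
  have hplus : HasDerivAt (fun s => ((φp s : ℂ) / 2 + (ψp s : ℂ))) ((b : ℂ) / 2 + c) t :=
    (hφ.ofReal_comp.div_const 2).add hψ.ofReal_comp
  have hminus : HasDerivAt (fun s => ((φp s : ℂ) / 2 - (ψp s : ℂ))) ((b : ℂ) / 2 - c) t :=
    (hφ.ofReal_comp.div_const 2).sub hψ.ofReal_comp
  have he1 : HasDerivAt (fun s => Complex.exp (-Complex.I * ((φp s : ℂ) / 2 + ψp s)))
      (Complex.exp (-Complex.I * ((φp t : ℂ) / 2 + ψp t)) * (-Complex.I * ((b : ℂ) / 2 + c))) t := by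
    have := (hplus.const_mul (-Complex.I)).cexp
    simpa using this
  have he2 : HasDerivAt (fun s => Complex.exp (-Complex.I * ((φp s : ℂ) / 2 - ψp s)))
      (Complex.exp (-Complex.I * ((φp t : ℂ) / 2 - ψp t)) * (-Complex.I * ((b : ℂ) / 2 - c))) t := by
    have := (hminus.const_mul (-Complex.I)).cexp
    simpa using this
  have he3 : HasDerivAt (fun s => Complex.exp (Complex.I * ((φp s : ℂ) / 2 - ψp s)))
      (Complex.exp (Complex.I * ((φp t : ℂ) / 2 - ψp t)) * (Complex.I * ((b : ℂ) / 2 - c))) t := by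
    have := (hminus.const_mul Complex.I).cexp
    simpa using this
  have he4 : HasDerivAt (fun s => Complex.exp (Complex.I * ((φp s : ℂ) / 2 + ψp s)))
      (Complex.exp (Complex.I * ((φp t : ℂ) / 2 + ψp t)) * (Complex.I * ((b : ℂ) / 2 + c))) t := by
    have := (hplus.const_mul Complex.I).cexp
    simpa using this
  fin_cases i <;> fin_cases j <;>
    simp only [uMat, uD, Matrix.cons_val', Matrix.cons_val_zero, Matrix.cons_val_one,
      Matrix.head_cons, Matrix.empty_val', Matrix.cons_val_fin_one, Matrix.head_fin_const,
      Fin.mk_zero, Fin.mk_one, Matrix.of_apply]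
  · exact (hcos.mul he1).congr_deriv (by push_cast; ring)
  · exact (hsin.mul he2).congr_deriv (by push_cast; ring)
  · exact (hnsin.mul he3).congr_deriv (by push_cast; ring)
  · exact (hcos.mul he4).congr_deriv (by push_cast; ring)

lemma hrelA (φ0 ψ0 : ℝ) : Complex.exp (Complex.I * ((φ0:ℂ) / 2 - ψ0)) =
    (Complex.cos ↑φ0 + Complex.sin ↑φ0 * Complex.I) * Complex.exp (-(Complex.I * ((φ0:ℂ) / 2 + ψ0))) := by
  rw [← Complex.exp_mul_I, ← Complex.exp_add]
  congr 1; ring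

lemma hrelB (φ0 ψ0 : ℝ) : Complex.exp (Complex.I * ((φ0:ℂ) / 2 + ψ0)) =
    (Complex.cos ↑φ0 + Complex.sin ↑φ0 * Complex.I) * Complex.exp (-(Complex.I * ((φ0:ℂ) / 2 - ψ0))) := by
  rw [← Complex.exp_mul_I, ← Complex.exp_add]
  congr 1; ring

lemma hrelC (φ0 ψ0 : ℝ) : Complex.exp (-(Complex.I * ((φ0:ℂ) / 2 + ψ0))) =
    (Complex.cos ↑φ0 - Complex.sin ↑φ0 * Complex.I) * Complex.exp (Complex.I * ((φ0:ℂ) / 2 - ψ0)) := by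
  have h : Complex.cos ↑φ0 - Complex.sin ↑φ0 * Complex.I = Complex.exp (-(φ0:ℂ) * Complex.I) := by
    rw [Complex.exp_mul_I, Complex.cos_neg, Complex.sin_neg]; ring
  rw [h, ← Complex.exp_add]
  congr 1; ring

lemma hrelD (φ0 ψ0 : ℝ) : Complex.exp (-(Complex.I * ((φ0:ℂ) / 2 - ψ0))) =
    (Complex.cos ↑φ0 - Complex.sin ↑φ0 * Complex.I) * Complex.exp (Complex.I * ((φ0:ℂ) / 2 + ψ0)) := by
  have h : Complex.cos ↑φ0 - Complex.sin ↑φ0 * Complex.I = Complex.exp (-(φ0:ℂ) * Complex.I) := by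
    rw [Complex.exp_mul_I, Complex.cos_neg, Complex.sin_neg]; ring
  rw [h, ← Complex.exp_add]
  congr 1; ring

/-- Real reduced system from the coordinate formulas. -/
lemma realPQ (κ X Y χ0 φ0 b c : ℝ) (hs : Real.sin χ0 ≠ 0) (hc : Real.cos χ0 ≠ 0)
    (hb : b = 1 + 2 * κ * (Real.cos (2 * χ0) / Real.sin (2 * χ0)) * (X * Real.cos φ0 - Y * Real.sin φ0))
    (hcc : c = -(κ / Real.sin (2 * χ0)) * (X * Real.cos φ0 - Y * Real.sin φ0)) :
    Real.cos χ0 * (b / 2 + c) = Real.cos χ0 / 2 - κ * Real.sin χ0 * (X * Real.cos φ0 - Y * Real.sin φ0) ∧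
    Real.sin χ0 * (b / 2 - c) = Real.sin χ0 / 2 + κ * Real.cos χ0 * (X * Real.cos φ0 - Y * Real.sin φ0) := by
  subst hb hcc
  rw [Real.sin_two_mul, Real.cos_two_mul']
  constructor
  · field_simp
    linear_combination (κ * (X * Real.cos φ0 - Y * Real.sin φ0)) * Real.sin_sq_add_cos_sq χ0
  · field_simp
    linear_combination (-(κ * (X * Real.cos φ0 - Y * Real.sin φ0))) * Real.sin_sq_add_cos_sq χ0

end

noncomputable section

lemma key_mpr (κ X Y χ0 φ0 ψ0 a b c : ℝ) (hs : Real.sin χ0 ≠ 0) (hc : Real.cos χ0 ≠ 0)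
    (ha : a = κ * (X * Real.sin φ0 + Y * Real.cos φ0))
    (hb : b = 1 + 2 * κ * (Real.cos (2 * χ0) / Real.sin (2 * χ0)) * (X * Real.cos φ0 - Y * Real.sin φ0))
    (hcc : c = -(κ / Real.sin (2 * χ0)) * (X * Real.cos φ0 - Y * Real.sin φ0)) :
    ∀ i j, uD χ0 φ0 ψ0 a b c i j = ((-Complex.I) • (Hmat κ X Y * uMat χ0 φ0 ψ0)) i j := by
  obtain ⟨P, Q⟩ := realPQ κ X Y χ0 φ0 b c hs hc hb hcc
  have r1C : (a : ℂ) = ↑κ * (↑X * Complex.sin ↑φ0 + ↑Y * Complex.cos ↑φ0) := by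
    rw [ha]; push_cast; ring
  have PC := congrArg (Complex.ofReal) P
  have QC := congrArg (Complex.ofReal) Q
  push_cast at PC QC
  intro i j
  fin_cases i <;> fin_cases j <;>
    simp [uD, Hmat, uMat, Matrix.mul_apply, Fin.sum_univ_two]
  · rw [hrelA φ0 ψ0]
    linear_combination (-(Complex.sin ↑χ0) * Complex.exp (-(Complex.I * ((φ0:ℂ) / 2 + ↑ψ0)))) * r1C +
      (-Complex.I * Complex.exp (-(Complex.I * ((φ0:ℂ) / 2 + ↑ψ0)))) * PC +
      (-(Complex.sin ↑χ0) * Complex.exp (-(Complex.I * ((φ0:ℂ) / 2 + ↑ψ0))) * ↑κ *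
        (↑X * Complex.sin ↑φ0 + ↑Y * Complex.cos ↑φ0 + Complex.I * ↑Y * Complex.sin ↑φ0)) * Complex.I_sq
  · rw [hrelB φ0 ψ0]
    linear_combination (Complex.cos ↑χ0 * Complex.exp (-(Complex.I * ((φ0:ℂ) / 2 - ↑ψ0)))) * r1C +
      (-Complex.I * Complex.exp (-(Complex.I * ((φ0:ℂ) / 2 - ↑ψ0)))) * QC +
      (Complex.cos ↑χ0 * Complex.exp (-(Complex.I * ((φ0:ℂ) / 2 - ↑ψ0))) * ↑κ *
        (↑X * Complex.sin ↑φ0 + ↑Y * Complex.cos ↑φ0 + Complex.I * ↑Y * Complex.sin ↑φ0)) * Complex.I_sq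
  · rw [hrelC φ0 ψ0]
    linear_combination (-(Complex.cos ↑χ0) * Complex.exp (Complex.I * ((φ0:ℂ) / 2 - ↑ψ0))) * r1C +
      (-Complex.I * Complex.exp (Complex.I * ((φ0:ℂ) / 2 - ↑ψ0))) * QC +
      (Complex.cos ↑χ0 * Complex.exp (Complex.I * ((φ0:ℂ) / 2 - ↑ψ0)) * ↑κ *
        (-(↑X * Complex.sin ↑φ0) - ↑Y * Complex.cos ↑φ0 + Complex.I * ↑Y * Complex.sin ↑φ0)) * Complex.I_sq
  · rw [hrelD φ0 ψ0]
    linear_combination (-(Complex.sin ↑χ0) * Complex.exp (Complex.I * ((φ0:ℂ) / 2 + ↑ψ0))) * r1C +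
      (Complex.I * Complex.exp (Complex.I * ((φ0:ℂ) / 2 + ↑ψ0))) * PC +
      (Complex.sin ↑χ0 * Complex.exp (Complex.I * ((φ0:ℂ) / 2 + ↑ψ0)) * ↑κ *
        (-(↑X * Complex.sin ↑φ0) - ↑Y * Complex.cos ↑φ0 + Complex.I * ↑Y * Complex.sin ↑φ0)) * Complex.I_sq

lemma key_mp (κ X Y χ0 φ0 ψ0 a b c : ℝ) (hs : Real.sin χ0 ≠ 0) (hc : Real.cos χ0 ≠ 0)
    (h : ∀ i j, uD χ0 φ0 ψ0 a b c i j = ((-Complex.I) • (Hmat κ X Y * uMat χ0 φ0 ψ0)) i j) :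
    a = κ * (X * Real.sin φ0 + Y * Real.cos φ0) ∧
    b = 1 + 2 * κ * (Real.cos (2 * χ0) / Real.sin (2 * χ0)) * (X * Real.cos φ0 - Y * Real.sin φ0) ∧
    c = -(κ / Real.sin (2 * χ0)) * (X * Real.cos φ0 - Y * Real.sin φ0) := by
  have h00 := h 0 0
  have h01 := h 0 1
  simp [uD, Hmat, uMat, Matrix.mul_apply, Fin.sum_univ_two] at h00 h01
  rw [hrelA φ0 ψ0] at h00
  rw [hrelB φ0 ψ0] at h01
  have e00 : (-(Complex.sin ↑χ0 * ↑a) + -(Complex.cos ↑χ0 * (Complex.I * ((b:ℂ) / 2 + ↑c)))) =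
      -(Complex.I * (2⁻¹ * Complex.cos ↑χ0 + -(↑κ * (↑X + Complex.I * ↑Y) *
        (Complex.sin ↑χ0 * (Complex.cos ↑φ0 + Complex.sin ↑φ0 * Complex.I))))) :=
    mul_right_cancel₀ (Complex.exp_ne_zero (-(Complex.I * ((φ0:ℂ) / 2 + ↑ψ0))))
      (by linear_combination h00)
  have e01 : (Complex.cos ↑χ0 * ↑a + -(Complex.sin ↑χ0 * (Complex.I * ((b:ℂ) / 2 - ↑c)))) =
      -(Complex.I * (2⁻¹ * Complex.sin ↑χ0 + ↑κ * (↑X + Complex.I * ↑Y) *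
        (Complex.cos ↑χ0 * (Complex.cos ↑φ0 + Complex.sin ↑φ0 * Complex.I)))) :=
    mul_right_cancel₀ (Complex.exp_ne_zero (-(Complex.I * ((φ0:ℂ) / 2 - ↑ψ0))))
      (by linear_combination h01)
  have hre00 := congrArg Complex.re e00
  have him00 := congrArg Complex.im e00
  have him01 := congrArg Complex.im e01
  simp [Complex.add_re, Complex.mul_re, Complex.mul_im, Complex.sin_ofReal_re,
    Complex.cos_ofReal_re, Complex.sin_ofReal_im, Complex.cos_ofReal_im] at hre00 him00 him01
  set D := X * Real.cos φ0 - Y * Real.sin φ0 with hD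
  have P : Real.cos χ0 * (b / 2 + c) = Real.cos χ0 / 2 - κ * Real.sin χ0 * D := by
    rw [hD]; linear_combination -him00
  have Q : Real.sin χ0 * (b / 2 - c) = Real.sin χ0 / 2 + κ * Real.cos χ0 * D := by
    rw [hD]; linear_combination -him01
  refine ⟨?_, ?_, ?_⟩
  · apply mul_left_cancel₀ hs
    linear_combination -hre00
  · rw [Real.sin_two_mul, Real.cos_two_mul']
    field_simp
    linear_combination Real.sin χ0 * P + Real.cos χ0 * Q
  · rw [Real.sin_two_mul]
    field_simp
    linear_combination Real.sin χ0 * P - Real.cos χ0 * Q - (κ * D) * Real.sin_sq_add_cos_sq χ0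

/-- `U_t = u(χ_t, φ_t, ψ_t)` solves the Schrödinger equation `i dU_t = H(t) U_t dt`
if and only if the coordinates satisfy
`dχ = κ[X sin φ + Y cos φ] dt`,
`dφ = (1 + (2κ/tan 2χ)[X cos φ − Y sin φ]) dt`,
`dψ = −(κ/sin 2χ)[X cos φ − Y sin φ] dt`
(`1/tan 2χ` is written `cos 2χ / sin 2χ`). -/
theorem schrodinger_iff_coordinate_system
    (κ : ℝ) (X Y χ φp ψp : ℝ → ℝ)
    (hχd : Differentiable ℝ χ) (hφd : Differentiable ℝ φp) (hψd : Differentiable ℝ ψp)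
    (hrange : ∀ t, χ t ∈ Set.Ioo 0 (π / 2)) :
    (∀ (t : ℝ) (i j : Fin 2),
        HasDerivAt (fun s => uMat (χ s) (φp s) (ψp s) i j)
          (((-Complex.I) • (Hmat κ (X t) (Y t) * uMat (χ t) (φp t) (ψp t))) i j) t)
    ↔
    (∀ t : ℝ,
      HasDerivAt χ (κ * (X t * Real.sin (φp t) + Y t * Real.cos (φp t))) t ∧
      HasDerivAt φp (1 + 2 * κ * (Real.cos (2 * χ t) / Real.sin (2 * χ t)) *
        (X t * Real.cos (φp t) - Y t * Real.sin (φp t))) t ∧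
      HasDerivAt ψp (-(κ / Real.sin (2 * χ t)) *
        (X t * Real.cos (φp t) - Y t * Real.sin (φp t))) t) := by
  have hsc : ∀ t, Real.sin (χ t) ≠ 0 ∧ Real.cos (χ t) ≠ 0 := by
    intro t
    obtain ⟨h1, h2⟩ := hrange t
    have hπ := Real.pi_pos
    exact ⟨ne_of_gt (Real.sin_pos_of_pos_of_lt_pi h1 (by linarith)),
      ne_of_gt (Real.cos_pos_of_mem_Ioo ⟨by linarith, h2⟩)⟩
  constructor
  · intro h t
    obtain ⟨hs, hc⟩ := hsc t
    have hdχ := (hχd t).hasDerivAt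
    have hdφ := (hφd t).hasDerivAt
    have hdψ := (hψd t).hasDerivAt
    have hU : ∀ i j, uD (χ t) (φp t) (ψp t) (deriv χ t) (deriv φp t) (deriv ψp t) i j =
        ((-Complex.I) • (Hmat κ (X t) (Y t) * uMat (χ t) (φp t) (ψp t))) i j :=
      fun i j => (uMat_hasDerivAt χ φp ψp _ _ _ t hdχ hdφ hdψ i j).unique (h t i j)
    obtain ⟨ha, hb, hcc⟩ := key_mp (κ) (X t) (Y t) (χ t) (φp t) (ψp t) _ _ _ hs hc hU
    exact ⟨ha ▸ hdχ, hb ▸ hdφ, hcc ▸ hdψ⟩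
  · intro h t i j
    obtain ⟨hs, hc⟩ := hsc t
    obtain ⟨ha, hb, hcc⟩ := h t
    have hd := uMat_hasDerivAt χ φp ψp _ _ _ t ha hb hcc i j
    rwa [key_mpr (κ) (X t) (Y t) (χ t) (φp t) (ψp t) _ _ _ hs hc rfl rfl rfl i j] at hd

end
end

section
/- If U is a random element of SU(2) distributed according to the Haar probability measure, then for every b ∈ [0,1], the probability that |⟨+|U|−⟩|² ≤ b equals b; that is, the squared modulus of the off-diagonal matrix element of U (in the canonical basis of C²) is uniformly distributed on [0,1]. In particular its expectation equals 1/2. -/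
open MeasureTheory

noncomputable section

instance : MeasurableSpace (Matrix (Fin 2) (Fin 2) ℂ) :=
  inferInstanceAs (MeasurableSpace (Fin 2 → Fin 2 → ℂ))

namespace SUHaar

open Complex Real Set ENNReal


abbrev Mat := Matrix (Fin 2) (Fin 2) ℂ

instance : MeasurableSingletonClass Mat :=
  inferInstanceAs (MeasurableSingletonClass (Fin 2 → Fin 2 → ℂ))

lemma measurable_conj : Measurable (starRingEnd ℂ) := Complex.conjLIE.continuous.measurable
def act (g : Mat) (v : ℂ × ℂ) : ℂ × ℂ :=
  (g 0 0 * v.1 + g 0 1 * v.2, g 1 0 * v.1 + g 1 1 * v.2)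
def psi (v : ℂ × ℂ) : Mat :=
  !![v.1, -(starRingEnd ℂ) v.2; v.2, (starRingEnd ℂ) v.1]
def nrm (v : ℂ × ℂ) : ℝ := Complex.normSq v.1 + Complex.normSq v.2
def nfn (v : ℂ × ℂ) : ℂ × ℂ :=
  (((Real.sqrt (nrm v))⁻¹ : ℝ) * v.1, ((Real.sqrt (nrm v))⁻¹ : ℝ) * v.2)

lemma measurable_entry (i j : Fin 2) : Measurable (fun A : Mat => A i j) :=
  (measurable_pi_apply j).comp (measurable_pi_apply i)

lemma measurable_act (g : Mat) : Measurable (act g) := by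
  apply Measurable.prod <;> dsimp [act]
  · exact (measurable_fst.const_mul _).add (measurable_snd.const_mul _)
  · exact (measurable_fst.const_mul _).add (measurable_snd.const_mul _)

lemma measurable_psi : Measurable psi := by
  apply measurable_pi_lambda; intro i
  apply measurable_pi_lambda; intro j
  fin_cases i <;> fin_cases j <;>
    simp [psi] <;>
  · first
      | exact measurable_fst
      | exact measurable_snd
      | exact measurable_conj.comp measurable_snd
      | exact (measurable_conj.comp measurable_snd).neg
      | exact measurable_conj.comp measurable_fst

lemma measurable_nrm : Measurable nrm :=
  (Complex.continuous_normSq.measurable.comp measurable_fst).add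
    (Complex.continuous_normSq.measurable.comp measurable_snd)

lemma measurable_coef : Measurable (fun v : ℂ × ℂ => (((Real.sqrt (nrm v))⁻¹ : ℝ) : ℂ)) :=
  Complex.measurable_ofReal.comp ((Real.continuous_sqrt.measurable.comp measurable_nrm).inv)

lemma measurable_nfn : Measurable nfn :=
  (measurable_coef.mul measurable_fst).prod (measurable_coef.mul measurable_snd)

lemma measurable_star_mat : Measurable (fun A : Mat => star A) := by
  apply measurable_pi_lambda; intro i
  apply measurable_pi_lambda; intro j
  exact measurable_conj.comp (measurable_entry j i)

lemma measurable_mul2 : Measurable (fun p : Mat × Mat => p.1 * p.2) := by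
  apply measurable_pi_lambda; intro i
  apply measurable_pi_lambda; intro j
  have : (fun p : Mat × Mat => (p.1 * p.2) i j)
      = fun p => ∑ k, p.1 i k * p.2 k j := by
    funext p; simp [Matrix.mul_apply]
  rw [this]
  exact Finset.measurable_sum _ fun k _ =>
    ((measurable_entry i k).comp measurable_fst).mul ((measurable_entry k j).comp measurable_snd)

lemma measurable_mul_left (g : Mat) : Measurable (fun A : Mat => g * A) :=
  measurable_mul2.comp (measurable_const.prodMk measurable_id)

lemma measurable_mul_right (g : Mat) : Measurable (fun A : Mat => A * g) :=
  measurable_mul2.comp (measurable_id.prodMk measurable_const)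

lemma measurable_entry01sq : Measurable (fun A : Mat => ‖A 0 1‖ ^ 2) :=
  ((continuous_norm.measurable.comp (measurable_entry 0 1)).pow measurable_const)

lemma measurableSet_SU : MeasurableSet {A : Mat | A ∈ Matrix.specialUnitaryGroup (Fin 2) ℂ} := by
  have : {A : Mat | A ∈ Matrix.specialUnitaryGroup (Fin 2) ℂ}
      = {A : Mat | A * star A = 1} ∩ {A : Mat | A.det = 1} := by
    ext A
    simp [Matrix.mem_specialUnitaryGroup_iff, Matrix.mem_unitaryGroup_iff]
  rw [this]
  have h1 : MeasurableSet {A : Mat | A * star A = 1} := by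
    have : Measurable (fun A : Mat => A * star A) :=
      measurable_mul2.comp (measurable_id.prodMk measurable_star_mat)
    exact this (measurableSet_singleton 1)
  have h2 : MeasurableSet {A : Mat | A.det = 1} := by
    have : Measurable (fun A : Mat => A.det) := by
      simp_rw [Matrix.det_fin_two]
      exact ((measurable_entry 0 0).mul (measurable_entry 1 1)).sub
        ((measurable_entry 0 1).mul (measurable_entry 1 0))
    exact this (measurableSet_singleton 1)
  exact h1.inter h2







def F (v : ℂ × ℂ) : Mat := star (psi (nfn v))

lemma unitary_entries {g : Mat} (hg : g ∈ Matrix.unitaryGroup (Fin 2) ℂ) :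
    ((starRingEnd ℂ) (g 0 0) * g 0 0 + (starRingEnd ℂ) (g 1 0) * g 1 0 = 1) ∧
    ((starRingEnd ℂ) (g 0 0) * g 0 1 + (starRingEnd ℂ) (g 1 0) * g 1 1 = 0) ∧
    ((starRingEnd ℂ) (g 0 1) * g 0 1 + (starRingEnd ℂ) (g 1 1) * g 1 1 = 1) := by
  have h := Matrix.mem_unitaryGroup_iff'.mp hg
  have e00 := congrFun (congrFun h 0) 0
  have e01 := congrFun (congrFun h 0) 1
  have e11 := congrFun (congrFun h 1) 1
  simp [Matrix.mul_apply, Fin.sum_univ_two, Matrix.conjTranspose_apply, Matrix.one_apply,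
    Matrix.star_apply] at e00 e01 e11
  exact ⟨e00, e01, e11⟩

lemma act_act (g h : Mat) (v : ℂ × ℂ) : act g (act h v) = act (g * h) v := by
  simp only [act, Matrix.mul_apply, Fin.sum_univ_two, Prod.mk.injEq]
  constructor <;> ring

lemma act_one (v : ℂ × ℂ) : act 1 v = v := by
  simp [act, Matrix.one_apply]

lemma nrm_act {g : Mat} (hg : g ∈ Matrix.unitaryGroup (Fin 2) ℂ) (v : ℂ × ℂ) :
    nrm (act g v) = nrm v := by
  obtain ⟨e00, e01, e11⟩ := unitary_entries hg
  have e01c := congrArg (starRingEnd ℂ) e01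
  simp only [map_add, map_mul, Complex.conj_conj, map_zero] at e01c
  apply Complex.ofReal_injective
  have expand : ∀ w : ℂ × ℂ, (↑(nrm w) : ℂ) = w.1 * (starRingEnd ℂ) w.1 + w.2 * (starRingEnd ℂ) w.2 := by
    intro w
    simp [nrm, Complex.ofReal_add, ← Complex.mul_conj]
  rw [expand, expand]
  simp only [act, map_add, map_mul]
  linear_combination (v.1 * (starRingEnd ℂ) v.1) * e00 + (v.2 * (starRingEnd ℂ) v.2) * e11 +
    (v.1 * (starRingEnd ℂ) v.2) * e01c + ((starRingEnd ℂ) v.1 * v.2) * e01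

lemma su_entries {g : Mat} (hg : g ∈ Matrix.specialUnitaryGroup (Fin 2) ℂ) :
    g 1 1 = (starRingEnd ℂ) (g 0 0) ∧ g 1 0 = -(starRingEnd ℂ) (g 0 1) := by
  obtain ⟨hu, hdet⟩ := Matrix.mem_specialUnitaryGroup_iff.mp hg
  have hadj : g * g.adjugate = 1 := by
    rw [Matrix.mul_adjugate, hdet, one_smul]
  have hstar : star g = g.adjugate := by
    calc star g = star g * (g * g.adjugate) := by rw [hadj, mul_one]
    _ = (star g * g) * g.adjugate := by rw [mul_assoc]
    _ = g.adjugate := by rw [Matrix.mem_unitaryGroup_iff'.mp hu, one_mul]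
  have h00 := congrFun (congrFun hstar 0) 0
  have h01 := congrFun (congrFun hstar 0) 1
  rw [Matrix.adjugate_fin_two] at h00 h01
  simp [Matrix.star_apply] at h00 h01
  constructor
  · rw [← h00]
  · have := congrArg (starRingEnd ℂ) h01
    simpa [Complex.conj_conj] using this

lemma psi_equivariant {g : Mat} (hg : g ∈ Matrix.specialUnitaryGroup (Fin 2) ℂ) (v : ℂ × ℂ) :
    psi (act g v) = g * psi v := by
  obtain ⟨h11, h10⟩ := su_entries hg
  ext i j
  fin_cases i <;> fin_cases j <;>
    simp [psi, act, Matrix.mul_apply, Fin.sum_univ_two, h11, h10, map_add, map_mul, map_neg,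
      Complex.conj_conj] <;> ring

lemma psi_mem {v : ℂ × ℂ} (hv : nrm v = 1) :
    psi v ∈ Matrix.specialUnitaryGroup (Fin 2) ℂ := by
  have hc : v.1 * (starRingEnd ℂ) v.1 + v.2 * (starRingEnd ℂ) v.2 = 1 := by
    rw [Complex.mul_conj, Complex.mul_conj]
    rw [← Complex.ofReal_add]
    norm_cast
  rw [Matrix.mem_specialUnitaryGroup_iff]
  constructor
  · rw [Matrix.mem_unitaryGroup_iff]
    ext i j
    fin_cases i <;> fin_cases j <;>
      [skip; skip; skip; skip] <;>
      · simp [psi, Matrix.mul_apply, Fin.sum_univ_two, Matrix.conjTranspose_apply,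
          Matrix.one_apply, Matrix.star_apply, Complex.conj_conj, map_neg]
        first | linear_combination hc | ring
  · rw [Matrix.det_fin_two]
    simp [psi]
    first | linear_combination hc | linear_combination -hc

lemma star_mem_SU {A : Mat} (hA : A ∈ Matrix.specialUnitaryGroup (Fin 2) ℂ) :
    star A ∈ Matrix.specialUnitaryGroup (Fin 2) ℂ := by
  obtain ⟨hu, hdet⟩ := Matrix.mem_specialUnitaryGroup_iff.mp hA
  rw [Matrix.mem_specialUnitaryGroup_iff]
  refine ⟨Unitary.star_mem hu, ?_⟩
  rw [Matrix.star_eq_conjTranspose, Matrix.det_conjTranspose, hdet]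
  simp

lemma nfn_act {g : Mat} (hg : g ∈ Matrix.unitaryGroup (Fin 2) ℂ) (v : ℂ × ℂ) :
    nfn (act g v) = act g (nfn v) := by
  have h : nrm (act g v) = nrm v := nrm_act hg v
  unfold nfn
  rw [h]
  simp only [act, Prod.mk.injEq]
  constructor <;> ring

lemma nrm_pos {v : ℂ × ℂ} (hv : v ≠ 0) : 0 < nrm v := by
  have : v.1 ≠ 0 ∨ v.2 ≠ 0 := by
    by_contra h
    push_neg at h
    exact hv (Prod.ext h.1 h.2)
  rcases this with h | h
  · have := Complex.normSq_pos.mpr h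
    have := Complex.normSq_nonneg v.2
    unfold nrm; linarith
  · have := Complex.normSq_pos.mpr h
    have := Complex.normSq_nonneg v.1
    unfold nrm; linarith

lemma nrm_nfn {v : ℂ × ℂ} (hv : v ≠ 0) : nrm (nfn v) = 1 := by
  have hp := nrm_pos hv
  simp only [nfn, nrm, Complex.normSq_mul, Complex.normSq_ofReal]
  have : ((Real.sqrt (nrm v))⁻¹) * ((Real.sqrt (nrm v))⁻¹) * (nrm v) = 1 := by
    rw [← mul_inv, Real.mul_self_sqrt hp.le, inv_mul_cancel₀ hp.ne']
  calc (Real.sqrt (nrm v))⁻¹ * (Real.sqrt (nrm v))⁻¹ * Complex.normSq v.1 +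
      (Real.sqrt (nrm v))⁻¹ * (Real.sqrt (nrm v))⁻¹ * Complex.normSq v.2
      = (Real.sqrt (nrm v))⁻¹ * (Real.sqrt (nrm v))⁻¹ * (nrm v) := by unfold nrm; ring
    _ = 1 := this

lemma F_mem {v : ℂ × ℂ} (hv : v ≠ 0) : F v ∈ Matrix.specialUnitaryGroup (Fin 2) ℂ :=
  star_mem_SU (psi_mem (nrm_nfn hv))

lemma F_mul {A : Mat} (hA : A ∈ Matrix.specialUnitaryGroup (Fin 2) ℂ) (v : ℂ × ℂ) :
    F (act (star A) v) = F v * A := by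
  have hsu : star A ∈ Matrix.specialUnitaryGroup (Fin 2) ℂ := star_mem_SU hA
  have hu : star A ∈ Matrix.unitaryGroup (Fin 2) ℂ :=
    (Matrix.mem_specialUnitaryGroup_iff.mp hsu).1
  unfold F
  rw [nfn_act hu, psi_equivariant hsu, star_mul, star_star]


lemma lgauss1 {t : ℝ} (ht : 0 < t) :
    ∫⁻ x : ℝ, ENNReal.ofReal (Real.exp (-(t * x ^ 2))) = ENNReal.ofReal (Real.sqrt (π / t)) := by
  rw [← ofReal_integral_eq_lintegral_ofReal]
  · congr 1
    simpa [neg_mul] using integral_gaussian t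
  · simpa [neg_mul] using integrable_exp_neg_mul_sq ht
  · exact Filter.Eventually.of_forall fun x => (Real.exp_pos _).le

lemma lgauss_complex {t : ℝ} (ht : 0 < t) :
    ∫⁻ z : ℂ, ENNReal.ofReal (Real.exp (-(t * Complex.normSq z)))
      = ENNReal.ofReal (π / t) := by
  have h := Complex.volume_preserving_equiv_real_prod.symm
  calc (∫⁻ z : ℂ, ENNReal.ofReal (Real.exp (-(t * Complex.normSq z))))
      = ∫⁻ p : ℝ × ℝ, ENNReal.ofReal
          (Real.exp (-(t * Complex.normSq (Complex.measurableEquivRealProd.symm p)))) := by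
        rw [← h.map_eq, lintegral_map _ Complex.measurableEquivRealProd.symm.measurable]
        exact ENNReal.measurable_ofReal.comp
          ((Real.continuous_exp.measurable).comp (continuous_const.mul Complex.continuous_normSq).measurable.neg)
    _ = ∫⁻ p : ℝ × ℝ, ENNReal.ofReal (Real.exp (-(t * p.1 ^ 2)))
          * ENNReal.ofReal (Real.exp (-(t * p.2 ^ 2))) := by
        congr 1; funext p
        rw [← ENNReal.ofReal_mul (Real.exp_pos _).le, ← Real.exp_add]
        congr 2
        simp [Complex.normSq_mk, Complex.measurableEquivRealProd_symm_apply]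
        ring
    _ = (∫⁻ x : ℝ, ENNReal.ofReal (Real.exp (-(t * x ^ 2))))
          * ∫⁻ x : ℝ, ENNReal.ofReal (Real.exp (-(t * x ^ 2))) := by
        rw [MeasureTheory.Measure.volume_eq_prod]
        have hm : AEMeasurable (fun x : ℝ => ENNReal.ofReal (Real.exp (-(t * x ^ 2)))) volume :=
          (ENNReal.measurable_ofReal.comp ((Real.continuous_exp.measurable).comp
            ((measurable_id.pow_const 2).const_mul t).neg)).aemeasurable
        exact lintegral_prod_mul hm hm
    _ = ENNReal.ofReal (Real.sqrt (π / t)) * ENNReal.ofReal (Real.sqrt (π / t)) := by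
        rw [lgauss1 ht]
    _ = ENNReal.ofReal (π / t) := by
        rw [← ENNReal.ofReal_mul (Real.sqrt_nonneg _),
          Real.mul_self_sqrt (div_nonneg Real.pi_pos.le ht.le)]

lemma integrable_gauss_complex {t : ℝ} (ht : 0 < t) :
    Integrable (fun z : ℂ => Real.exp (-(t * Complex.normSq z))) := by
  have h := Complex.volume_preserving_equiv_real_prod.symm
  rw [← h.map_eq]
  rw [integrable_map_measure]
  · have : ((fun z : ℂ => Real.exp (-(t * Complex.normSq z)))
        ∘ Complex.measurableEquivRealProd.symm)
        = fun p : ℝ × ℝ => Real.exp (-t * p.1 ^ 2) * Real.exp (-t * p.2 ^ 2) := by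
      funext p
      rw [← Real.exp_add]
      simp only [Function.comp_apply, Complex.measurableEquivRealProd_symm_apply,
        Complex.normSq_mk]
      congr 1
      ring
    rw [MeasureTheory.Measure.volume_eq_prod, this]
    exact (integrable_exp_neg_mul_sq ht).mul_prod (integrable_exp_neg_mul_sq ht)
  · exact ((Real.continuous_exp.comp
      ((continuous_const.mul Complex.continuous_normSq).neg)).aestronglyMeasurable)
  · exact Complex.measurableEquivRealProd.symm.measurable.aemeasurable

lemma disk_bochner {R : ℝ} (hR : 0 ≤ R) :
    ∫ z : ℂ, Set.indicator {z : ℂ | Complex.normSq z ≤ R}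
      (fun z => Real.exp (-Complex.normSq z)) z = π * (1 - Real.exp (-R)) := by
  rw [← Complex.integral_comp_polarCoord_symm]
  have heq : ∀ p ∈ polarCoord.target,
      p.1 • Set.indicator {z : ℂ | Complex.normSq z ≤ R}
        (fun z => Real.exp (-Complex.normSq z)) (Complex.polarCoord.symm p)
      = (Set.indicator {r : ℝ | r ≤ Real.sqrt R} (fun r => r * Real.exp (-r ^ 2)) p.1) * 1 := by
    intro p hp
    rw [polarCoord_target] at hp
    have hp1 : 0 < p.1 := hp.1
    have habs : Complex.normSq (Complex.polarCoord.symm p) = p.1 ^ 2 := by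
      rw [← Complex.sq_norm, Complex.norm_polarCoord_symm, abs_of_pos hp1]
    have hiff : Complex.polarCoord.symm p ∈ {z : ℂ | Complex.normSq z ≤ R}
        ↔ p.1 ∈ {r : ℝ | r ≤ Real.sqrt R} := by
      simp only [Set.mem_setOf_eq, habs]
      exact (Real.le_sqrt hp1.le hR).symm
    by_cases h : p.1 ∈ {r : ℝ | r ≤ Real.sqrt R}
    · rw [Set.indicator_of_mem (hiff.mpr h), Set.indicator_of_mem h, habs]
      simp [smul_eq_mul]
    · rw [Set.indicator_of_notMem (fun hh => h (hiff.mp hh)), Set.indicator_of_notMem h]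
      simp
  rw [setIntegral_congr_fun (polarCoord.open_target.measurableSet) heq, polarCoord_target]
  have hsplit : (∫ x : ℝ × ℝ in Set.Ioi (0:ℝ) ×ˢ Set.Ioo (-π) π,
      Set.indicator {r : ℝ | r ≤ Real.sqrt R} (fun r => r * Real.exp (-r ^ 2)) x.1 * 1)
      = (∫ r in Set.Ioi (0:ℝ), Set.indicator {r : ℝ | r ≤ Real.sqrt R}
          (fun r => r * Real.exp (-r ^ 2)) r) * (∫ _ in Set.Ioo (-π) π, (1:ℝ)) := by
    rw [MeasureTheory.Measure.volume_eq_prod]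
    exact setIntegral_prod_mul (L := ℝ)
      (fun r : ℝ => Set.indicator {r : ℝ | r ≤ Real.sqrt R} (fun r => r * Real.exp (-r ^ 2)) r)
      (fun _ : ℝ => (1:ℝ)) (Set.Ioi 0) (Set.Ioo (-π) π)
  rw [hsplit]
  have h2 : (∫ _ in Set.Ioo (-π) π, (1 : ℝ)) = 2 * π := by
    rw [MeasureTheory.setIntegral_const, smul_eq_mul, mul_one,
      Real.volume_real_Ioo_of_le (by linarith [Real.pi_pos] : -π ≤ π)]
    ring
  have h1 : (∫ r in Set.Ioi (0:ℝ), Set.indicator {r : ℝ | r ≤ Real.sqrt R}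
      (fun r => r * Real.exp (-r ^ 2)) r) = (1 - Real.exp (-R)) / 2 := by
    have hs : {r : ℝ | r ≤ Real.sqrt R} = Set.Iic (Real.sqrt R) := rfl
    rw [hs, setIntegral_indicator measurableSet_Iic, Set.Ioi_inter_Iic,
      ← intervalIntegral.integral_of_le (Real.sqrt_nonneg R)]
    have hderiv : ∀ r ∈ Set.uIcc (0:ℝ) (Real.sqrt R),
        HasDerivAt (fun r : ℝ => -Real.exp (-r ^ 2) / 2) (r * Real.exp (-r ^ 2)) r := by
      intro r _
      have h : HasDerivAt (fun r : ℝ => -Real.exp (-r ^ 2) / 2)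
          (-(Real.exp (-r ^ 2) * -(((2 : ℕ) : ℝ) * r ^ (2 - 1))) / 2) r :=
        (((hasDerivAt_pow 2 r).neg).exp).neg.div_const 2
      convert h using 1
      simp
      ring
    rw [intervalIntegral.integral_eq_sub_of_hasDerivAt hderiv]
    · rw [Real.sq_sqrt hR]
      simp [Real.exp_zero]
      try ring
    · apply Continuous.intervalIntegrable
      exact continuous_id.mul (Real.continuous_exp.comp (continuous_pow 2).neg)
  rw [h1, h2]
  ring

lemma ind_ofReal (s : Set ℂ) (f : ℂ → ℝ) (hf : ∀ z, 0 ≤ f z) (z : ℂ) :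
    Set.indicator s (fun z => ENNReal.ofReal (f z)) z = ENNReal.ofReal (Set.indicator s f z) := by
  by_cases h : z ∈ s <;> simp [h]

lemma disk_integral {R : ℝ} (hR : 0 ≤ R) :
    ∫⁻ z : ℂ, Set.indicator {z : ℂ | Complex.normSq z ≤ R}
      (fun z => ENNReal.ofReal (Real.exp (-Complex.normSq z))) z
      = ENNReal.ofReal (π * (1 - Real.exp (-R))) := by
  have hs : MeasurableSet {z : ℂ | Complex.normSq z ≤ R} :=
    measurableSet_le Complex.continuous_normSq.measurable measurable_const
  calc (∫⁻ z : ℂ, Set.indicator {z : ℂ | Complex.normSq z ≤ R}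
      (fun z => ENNReal.ofReal (Real.exp (-Complex.normSq z))) z)
      = ∫⁻ z : ℂ, ENNReal.ofReal (Set.indicator {z : ℂ | Complex.normSq z ≤ R}
          (fun z => Real.exp (-Complex.normSq z)) z) := by
        congr 1; funext z
        exact ind_ofReal _ _ (fun z => (Real.exp_pos _).le) z
    _ = ENNReal.ofReal (π * (1 - Real.exp (-R))) := by
        rw [← ofReal_integral_eq_lintegral_ofReal, disk_bochner hR]
        · have : Integrable (fun z : ℂ => Real.exp (-(1 * Complex.normSq z))) :=
            integrable_gauss_complex one_pos
          simp only [one_mul] at this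
          exact this.indicator hs
        · exact Filter.Eventually.of_forall fun z =>
            Set.indicator_nonneg (fun z _ => (Real.exp_pos _).le) z


lemma measurable_F : Measurable F := by
  unfold F
  exact measurable_star_mat.comp (measurable_psi.comp measurable_nfn)

def ρ : ℂ × ℂ → ENNReal := fun v =>
  ENNReal.ofReal (π⁻¹ * Real.exp (-Complex.normSq v.1)) *
  ENNReal.ofReal (π⁻¹ * Real.exp (-Complex.normSq v.2))

lemma mf1 : Measurable (fun z : ℂ => ENNReal.ofReal (π⁻¹ * Real.exp (-Complex.normSq z))) :=
  ENNReal.measurable_ofReal.comp ((Real.continuous_exp.comp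
    Complex.continuous_normSq.neg).measurable.const_mul π⁻¹)

lemma measurable_rho : Measurable ρ :=
  (mf1.comp measurable_fst).mul (mf1.comp measurable_snd)

lemma rho_eq (v : ℂ × ℂ) : ρ v = ENNReal.ofReal (π⁻¹ * π⁻¹ * Real.exp (-nrm v)) := by
  unfold ρ nrm
  rw [← ENNReal.ofReal_mul (by positivity)]
  congr 1
  rw [neg_add, Real.exp_add]
  ring

def γ : Measure (ℂ × ℂ) := volume.withDensity ρ

instance : MeasureTheory.Measure.IsAddHaarMeasure (volume : Measure (ℂ × ℂ)) :=
  MeasureTheory.Measure.prod.instIsAddHaarMeasure _ _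

lemma map_withDensity_equiv {α β : Type*} [MeasurableSpace α] [MeasurableSpace β]
    (e : α ≃ᵐ β) (μ : Measure α) (f : β → ENNReal) (hf : Measurable f) :
    Measure.map e (μ.withDensity (f ∘ e)) = (Measure.map e μ).withDensity f := by
  ext s hs
  rw [Measure.map_apply e.measurable hs, withDensity_apply _ hs,
    withDensity_apply _ (e.measurable hs), setLIntegral_map hs hf e.measurable]
  rfl

lemma lint_f1 : ∫⁻ z : ℂ, ENNReal.ofReal (π⁻¹ * Real.exp (-Complex.normSq z)) = 1 := by
  have : ∀ z : ℂ, ENNReal.ofReal (π⁻¹ * Real.exp (-Complex.normSq z))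
      = ENNReal.ofReal π⁻¹ * ENNReal.ofReal (Real.exp (-(1 * Complex.normSq z))) := by
    intro z
    rw [← ENNReal.ofReal_mul (by positivity)]
    norm_num
  simp_rw [this]
  have hmeas : Measurable (fun z : ℂ => ENNReal.ofReal (Real.exp (-(1 * Complex.normSq z)))) := by
    apply ENNReal.measurable_ofReal.comp
    apply Real.continuous_exp.measurable.comp
    exact (continuous_const.mul Complex.continuous_normSq).neg.measurable
  rw [lintegral_const_mul _ hmeas, lgauss_complex one_pos]
  rw [← ENNReal.ofReal_mul (by positivity)]
  rw [div_one]
  rw [inv_mul_cancel₀ Real.pi_ne_zero]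
  exact ENNReal.ofReal_one

instance : IsProbabilityMeasure γ := by
  constructor
  rw [γ, withDensity_apply _ MeasurableSet.univ, Measure.restrict_univ]
  unfold ρ
  rw [MeasureTheory.Measure.volume_eq_prod, lintegral_prod_mul mf1.aemeasurable mf1.aemeasurable,
    lint_f1, mul_one]

lemma gamma_invariant {g : Mat} (hg : g ∈ Matrix.unitaryGroup (Fin 2) ℂ) :
    Measure.map (act g) γ = γ := by
  have hginv : star g * g = 1 := Matrix.mem_unitaryGroup_iff'.mp hg
  have hginv' : g * star g = 1 := Matrix.mem_unitaryGroup_iff.mp hg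
  have hsu : star g ∈ Matrix.unitaryGroup (Fin 2) ℂ := Unitary.star_mem hg
  have hli : Function.LeftInverse (act (star g)) (act g) := fun v => by
    rw [act_act, hginv, act_one]
  have hri : Function.RightInverse (act (star g)) (act g) := fun v => by
    rw [act_act, hginv', act_one]
  let me : (ℂ × ℂ) ≃ᵐ (ℂ × ℂ) :=
    { toFun := act g
      invFun := act (star g)
      left_inv := hli
      right_inv := hri
      measurable_toFun := measurable_act g
      measurable_invFun := measurable_act (star g) }
  let e : (ℂ × ℂ) ≃ₗ[ℂ] (ℂ × ℂ) :=
    { toFun := act g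
      invFun := act (star g)
      left_inv := hli
      right_inv := hri
      map_add' := fun v w => by
        simp only [act, Prod.fst_add, Prod.snd_add, Prod.mk_add_mk, Prod.mk.injEq]
        constructor <;> ring
      map_smul' := fun c v => by
        simp only [act, Prod.smul_fst, Prod.smul_snd, smul_eq_mul, Prod.smul_mk,
          RingHom.id_apply, Prod.mk.injEq]
        constructor <;> ring }
  have hce : ⇑e = act g := rfl
  have hcm : ⇑me = act g := rfl
  haveI : (volume.map (act g)).IsAddHaarMeasure := by
    rw [← hce]
    exact Measure.MapLinearEquiv.isAddHaarMeasure volume e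
  have hmapvol := MeasureTheory.Measure.isAddLeftInvariant_eq_smul
    (volume.map (act g)) (volume : Measure (ℂ × ℂ))
  set c := MeasureTheory.Measure.addHaarScalarFactor
    (volume.map (act g)) (volume : Measure (ℂ × ℂ)) with hc
  have hrho : ρ ∘ (act g) = ρ := by
    funext v
    rw [Function.comp_apply, rho_eq, rho_eq, nrm_act hg]
  have hmapvol2 : Measure.map (act g) volume = ((c : ENNReal)) • volume := by
    rw [hmapvol]; rfl
  have hmain : Measure.map (act g) γ = ((c : ENNReal)) • γ := by
    calc Measure.map (act g) γ = Measure.map me (volume.withDensity (ρ ∘ ⇑me)) := by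
          rw [hcm, γ, hrho]
      _ = (Measure.map me volume).withDensity ρ := map_withDensity_equiv me volume ρ measurable_rho
      _ = (((c : ENNReal)) • volume).withDensity ρ := by
          rw [show Measure.map me volume = ((c : ENNReal)) • volume from hcm ▸ hmapvol2]
      _ = ((c : ENNReal)) • γ := by rw [withDensity_smul_measure, γ]
  have huniv : ((c : ENNReal)) = 1 := by
    have h1 := congrArg (fun m : Measure (ℂ × ℂ) => m Set.univ) hmain
    simp only [Measure.map_apply (measurable_act g) MeasurableSet.univ, Set.preimage_univ,
      Measure.smul_apply, smul_eq_mul, measure_univ, mul_one] at h1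
    exact h1.symm
  rw [hmain, huniv, one_smul]

lemma mft (t : ℝ) : Measurable (fun z : ℂ => ENNReal.ofReal (π⁻¹ * Real.exp (-(t * Complex.normSq z)))) := by
  apply ENNReal.measurable_ofReal.comp
  apply Measurable.const_mul
  apply Real.continuous_exp.measurable.comp
  exact (continuous_const.mul Complex.continuous_normSq).neg.measurable

lemma lint_ft {t : ℝ} (ht : 0 < t) :
    ∫⁻ z : ℂ, ENNReal.ofReal (π⁻¹ * Real.exp (-(t * Complex.normSq z))) = ENNReal.ofReal t⁻¹ := by
  have hpt : ∀ z : ℂ, ENNReal.ofReal (π⁻¹ * Real.exp (-(t * Complex.normSq z)))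
      = ENNReal.ofReal π⁻¹ * ENNReal.ofReal (Real.exp (-(t * Complex.normSq z))) := by
    intro z
    rw [← ENNReal.ofReal_mul (by positivity)]
  simp_rw [hpt]
  have hmeas : Measurable (fun z : ℂ => ENNReal.ofReal (Real.exp (-(t * Complex.normSq z)))) := by
    apply ENNReal.measurable_ofReal.comp
    apply Real.continuous_exp.measurable.comp
    exact (continuous_const.mul Complex.continuous_normSq).neg.measurable
  rw [lintegral_const_mul _ hmeas, lgauss_complex ht, ← ENNReal.ofReal_mul (by positivity)]
  congr 1
  field_simp

lemma gamma_cdf {b : ℝ} (hb0 : 0 ≤ b) (hb1 : b ≤ 1) :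
    γ {v : ℂ × ℂ | (1 - b) * Complex.normSq v.2 ≤ b * Complex.normSq v.1}
      = ENNReal.ofReal b := by
  by_cases hb : b = 1
  · subst hb
    have huniv : {v : ℂ × ℂ | (1 - 1) * Complex.normSq v.2 ≤ 1 * Complex.normSq v.1} = Set.univ := by
      ext v
      simp [Complex.normSq_nonneg]
    rw [huniv, measure_univ, ENNReal.ofReal_one]
  have hblt : b < 1 := lt_of_le_of_ne hb1 hb
  have h1b : 0 < 1 - b := by linarith
  set c : ℝ := b / (1 - b) with hcdef
  have hc0 : 0 ≤ c := div_nonneg hb0 h1b.le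
  set s : Set (ℂ × ℂ) := {v : ℂ × ℂ | (1 - b) * Complex.normSq v.2 ≤ b * Complex.normSq v.1}
    with hsdef
  have hs : MeasurableSet s := by
    apply measurableSet_le
    · exact (Complex.continuous_normSq.measurable.comp measurable_snd).const_mul (1 - b)
    · exact (Complex.continuous_normSq.measurable.comp measurable_fst).const_mul b
  have key : γ s = ∫⁻ z : ℂ, ∫⁻ w : ℂ, Set.indicator s ρ (z, w) := by
    rw [γ, withDensity_apply _ hs, ← lintegral_indicator hs,
      MeasureTheory.Measure.volume_eq_prod, lintegral_prod]
    exact (measurable_rho.indicator hs).aemeasurable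
  rw [key]
  have hin : ∀ z : ℂ, (∫⁻ w : ℂ, Set.indicator s ρ (z, w))
      = ENNReal.ofReal (π⁻¹ * Real.exp (-(1 * Complex.normSq z)))
        - ENNReal.ofReal (π⁻¹ * Real.exp (-((1 + c) * Complex.normSq z))) := by
    intro z
    have hR : 0 ≤ c * Complex.normSq z := mul_nonneg hc0 (Complex.normSq_nonneg _)
    have hiff : ∀ w : ℂ, ((z, w) ∈ s ↔ w ∈ {w : ℂ | Complex.normSq w ≤ c * Complex.normSq z}) := by
      intro w
      simp only [hsdef, Set.mem_setOf_eq]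
      rw [show c * Complex.normSq z = b * Complex.normSq z / (1 - b) by rw [hcdef]; ring,
        le_div_iff₀ h1b, mul_comm]
    have hpt : (fun w : ℂ => Set.indicator s ρ (z, w))
        = fun w : ℂ => (ENNReal.ofReal (π⁻¹ * Real.exp (-Complex.normSq z)) * ENNReal.ofReal π⁻¹) *
            Set.indicator {w : ℂ | Complex.normSq w ≤ c * Complex.normSq z}
              (fun w => ENNReal.ofReal (Real.exp (-Complex.normSq w))) w := by
      funext w
      by_cases hw : w ∈ {w : ℂ | Complex.normSq w ≤ c * Complex.normSq z}
      · rw [Set.indicator_of_mem ((hiff w).mpr hw), Set.indicator_of_mem hw]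
        simp only [ρ]
        rw [ENNReal.ofReal_mul (by positivity : (0:ℝ) ≤ π⁻¹),
          ENNReal.ofReal_mul (by positivity : (0:ℝ) ≤ π⁻¹)]
        ring
      · rw [Set.indicator_of_notMem (fun hh => hw ((hiff w).mp hh)),
          Set.indicator_of_notMem hw, mul_zero]
    have hmeasind : Measurable (Set.indicator {w : ℂ | Complex.normSq w ≤ c * Complex.normSq z}
        (fun w => ENNReal.ofReal (Real.exp (-Complex.normSq w)))) := by
      apply Measurable.indicator
      · exact ENNReal.measurable_ofReal.comp
          (Real.continuous_exp.measurable.comp Complex.continuous_normSq.neg.measurable)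
      · exact measurableSet_le Complex.continuous_normSq.measurable measurable_const
    rw [hpt, lintegral_const_mul _ hmeasind, disk_integral hR]
    rw [← ENNReal.ofReal_sub _ (by positivity)]
    rw [← ENNReal.ofReal_mul (by positivity), ← ENNReal.ofReal_mul (by positivity)]
    congr 1
    have hexp : Real.exp (-Complex.normSq z) * Real.exp (-(c * Complex.normSq z))
        = Real.exp (-((1 + c) * Complex.normSq z)) := by
      rw [← Real.exp_add]
      congr 1
      ring
    have hpi : π⁻¹ * π = 1 := inv_mul_cancel₀ Real.pi_ne_zero
    rw [one_mul]
    linear_combination (π⁻¹ * Real.exp (-Complex.normSq z)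
      * (1 - Real.exp (-(c * Complex.normSq z)))) * hpi - π⁻¹ * hexp
  simp_rw [hin]
  have hfin : (∫⁻ z : ℂ, ENNReal.ofReal (π⁻¹ * Real.exp (-((1 + c) * Complex.normSq z))))
      ≠ ⊤ := by
    rw [lint_ft (by linarith : (0:ℝ) < 1 + c)]
    exact ENNReal.ofReal_ne_top
  have hle : (fun z : ℂ => ENNReal.ofReal (π⁻¹ * Real.exp (-((1 + c) * Complex.normSq z))))
      ≤ᵐ[volume] fun z : ℂ => ENNReal.ofReal (π⁻¹ * Real.exp (-(1 * Complex.normSq z))) := by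
    apply Filter.Eventually.of_forall
    intro z
    apply ENNReal.ofReal_le_ofReal
    apply mul_le_mul_of_nonneg_left _ (by positivity : (0:ℝ) ≤ π⁻¹)
    apply Real.exp_le_exp.mpr
    have := Complex.normSq_nonneg z
    nlinarith
  rw [lintegral_sub (mft (1 + c)) hfin hle, lint_ft one_pos,
    lint_ft (by linarith : (0:ℝ) < 1 + c)]
  have h1c : (1 + c)⁻¹ = 1 - b := by
    rw [hcdef]
    rw [show 1 + b / (1 - b) = (1 - b)⁻¹ by field_simp; ring]
    rw [inv_inv]
  rw [inv_one, h1c, ← ENNReal.ofReal_sub _ (by linarith : (0:ℝ) ≤ 1 - b)]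
  congr 1
  ring

def ν : Measure Mat := Measure.map F γ

instance : IsProbabilityMeasure ν :=
  Measure.isProbabilityMeasure_map measurable_F.aemeasurable

lemma gamma_zero_singleton : γ ({0} : Set (ℂ × ℂ)) = 0 := by
  have h0 : (volume : Measure (ℂ × ℂ)) {0} = 0 := measure_singleton 0
  exact (withDensity_absolutelyContinuous volume ρ) h0

lemma nu_SU : ν {A : Mat | A ∈ Matrix.specialUnitaryGroup (Fin 2) ℂ} = 1 := by
  rw [ν, Measure.map_apply measurable_F measurableSet_SU]
  have hsub : (F ⁻¹' {A : Mat | A ∈ Matrix.specialUnitaryGroup (Fin 2) ℂ})ᶜ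
      ⊆ ({0} : Set (ℂ × ℂ)) := by
    intro v hv
    rw [Set.mem_compl_iff, Set.mem_preimage] at hv
    rw [Set.mem_singleton_iff]
    by_contra h0
    exact hv (F_mem h0)
  have hc : γ ((F ⁻¹' {A : Mat | A ∈ Matrix.specialUnitaryGroup (Fin 2) ℂ})ᶜ) = 0 :=
    measure_mono_null hsub gamma_zero_singleton
  have := measure_add_measure_compl (μ := γ)
    (measurable_F measurableSet_SU)
  rw [hc, add_zero, measure_univ] at this
  exact this

lemma nu_right_invariant {A : Mat} (hA : A ∈ Matrix.specialUnitaryGroup (Fin 2) ℂ) :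
    Measure.map (fun M : Mat => M * A) ν = ν := by
  have hsu : star A ∈ Matrix.specialUnitaryGroup (Fin 2) ℂ := star_mem_SU hA
  have hu : star A ∈ Matrix.unitaryGroup (Fin 2) ℂ :=
    (Matrix.mem_specialUnitaryGroup_iff.mp hsu).1
  rw [ν, Measure.map_map (measurable_mul_right A) measurable_F]
  have hfun : ((fun M : Mat => M * A) ∘ F) = F ∘ (act (star A)) := by
    funext v
    exact (F_mul hA v).symm
  rw [hfun, ← Measure.map_map measurable_F (measurable_act _), gamma_invariant hu]

lemma mu_eq_nu (μ : Measure Mat) [IsProbabilityMeasure μ]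
    (hsupp : μ {A : Mat | A ∈ Matrix.specialUnitaryGroup (Fin 2) ℂ} = 1)
    (hinv : ∀ g ∈ Matrix.specialUnitaryGroup (Fin 2) ℂ,
      Measure.map (fun A : Mat => g * A) μ = μ) :
    μ = ν := by
  have hμae : ∀ᵐ A ∂μ, A ∈ Matrix.specialUnitaryGroup (Fin 2) ℂ := by
    rw [ae_iff]
    have : {A : Mat | ¬ A ∈ Matrix.specialUnitaryGroup (Fin 2) ℂ}
        = {A : Mat | A ∈ Matrix.specialUnitaryGroup (Fin 2) ℂ}ᶜ := rfl
    rw [this, measure_compl measurableSet_SU (measure_ne_top μ _), hsupp, measure_univ,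
      tsub_self]
  have hνae : ∀ᵐ B ∂ν, B ∈ Matrix.specialUnitaryGroup (Fin 2) ℂ := by
    rw [ae_iff]
    have : {A : Mat | ¬ A ∈ Matrix.specialUnitaryGroup (Fin 2) ℂ}
        = {A : Mat | A ∈ Matrix.specialUnitaryGroup (Fin 2) ℂ}ᶜ := rfl
    rw [this, measure_compl measurableSet_SU (measure_ne_top ν _), nu_SU, measure_univ,
      tsub_self]
  ext s hs
  have hind : Measurable (Set.indicator s (1 : Mat → ENNReal)) :=
    measurable_one.indicator hs
  have calc1 : ν s = μ s := by
    calc ν s = ∫⁻ _, ν s ∂μ := by rw [lintegral_const, measure_univ, mul_one]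
      _ = ∫⁻ A, ∫⁻ B, Set.indicator s 1 (B * A) ∂ν ∂μ := by
          apply lintegral_congr_ae
          filter_upwards [hμae] with A hA
          calc ν s = Measure.map (fun B : Mat => B * A) ν s := by rw [nu_right_invariant hA]
            _ = ∫⁻ M, Set.indicator s 1 M ∂(Measure.map (fun B : Mat => B * A) ν) := by
                rw [lintegral_indicator_one hs]
            _ = ∫⁻ B, Set.indicator s 1 (B * A) ∂ν :=
                lintegral_map hind (measurable_mul_right A)
      _ = ∫⁻ B, ∫⁻ A, Set.indicator s 1 (B * A) ∂μ ∂ν := by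
          apply lintegral_lintegral_swap
          apply Measurable.aemeasurable
          exact hind.comp (measurable_mul2.comp (measurable_snd.prodMk measurable_fst))
      _ = ∫⁻ _, μ s ∂ν := by
          apply lintegral_congr_ae
          filter_upwards [hνae] with B hB
          calc ∫⁻ A, Set.indicator s 1 (B * A) ∂μ
              = ∫⁻ M, Set.indicator s 1 M ∂(Measure.map (fun A : Mat => B * A) μ) :=
                (lintegral_map hind (measurable_mul_left B)).symm
            _ = μ s := by rw [hinv B hB, lintegral_indicator_one hs]
      _ = μ s := by rw [lintegral_const, measure_univ, mul_one]
  exact calc1.symm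

lemma F01 (v : ℂ × ℂ) : F v 0 1 = (starRingEnd ℂ) ((nfn v).2) := by
  show (star (psi (nfn v))) 0 1 = _
  rw [Matrix.star_apply]
  simp [psi]

lemma sqrt_inv_sq {S : ℝ} (hS : 0 < S) : (Real.sqrt S)⁻¹ * (Real.sqrt S)⁻¹ = S⁻¹ := by
  rw [← Real.sqrt_inv, Real.mul_self_sqrt (inv_nonneg.mpr hS.le)]

lemma F_pre {b : ℝ} (hb0 : 0 ≤ b) :
    F ⁻¹' {A : Mat | ‖A 0 1‖ ^ 2 ≤ b}
      = {v : ℂ × ℂ | (1 - b) * Complex.normSq v.2 ≤ b * Complex.normSq v.1} := by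
  ext v
  simp only [Set.mem_preimage, Set.mem_setOf_eq]
  rw [F01, Complex.sq_norm, Complex.normSq_conj]
  by_cases hv : v = 0
  · subst hv
    simp [nfn]
    exact hb0
  · have hS : 0 < nrm v := nrm_pos hv
    have hkey : Complex.normSq ((nfn v).2) = (nrm v)⁻¹ * Complex.normSq v.2 := by
      simp only [nfn, Complex.normSq_mul, Complex.normSq_ofReal]
      rw [sqrt_inv_sq hS]
    rw [hkey]
    rw [show (nrm v)⁻¹ * Complex.normSq v.2 = Complex.normSq v.2 / nrm v from by ring,
      div_le_iff₀ hS]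
    unfold nrm
    constructor <;> intro h <;> nlinarith [Complex.normSq_nonneg v.1, Complex.normSq_nonneg v.2]

def q0 (v : ℂ × ℂ) : ℝ :=
  ((Real.sqrt (nrm v))⁻¹ * (Real.sqrt (nrm v))⁻¹) * Complex.normSq v.1
def q1 (v : ℂ × ℂ) : ℝ :=
  ((Real.sqrt (nrm v))⁻¹ * (Real.sqrt (nrm v))⁻¹) * Complex.normSq v.2

lemma measurable_q0 : Measurable q0 := by
  apply Measurable.mul
  · exact ((Real.continuous_sqrt.measurable.comp measurable_nrm).inv).mul
      ((Real.continuous_sqrt.measurable.comp measurable_nrm).inv)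
  · exact Complex.continuous_normSq.measurable.comp measurable_fst

lemma measurable_q1 : Measurable q1 := by
  apply Measurable.mul
  · exact ((Real.continuous_sqrt.measurable.comp measurable_nrm).inv).mul
      ((Real.continuous_sqrt.measurable.comp measurable_nrm).inv)
  · exact Complex.continuous_normSq.measurable.comp measurable_snd

lemma q_bound : ∀ v : ℂ × ℂ, (0 ≤ q0 v ∧ q0 v ≤ 1) ∧ (0 ≤ q1 v ∧ q1 v ≤ 1) := by
  intro v
  by_cases hv : v = 0
  · subst hv
    norm_num [q0, q1, nrm]
  · have hS : 0 < nrm v := nrm_pos hv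
    have h0 : (0:ℝ) ≤ Complex.normSq v.1 := Complex.normSq_nonneg _
    have h1 : (0:ℝ) ≤ Complex.normSq v.2 := Complex.normSq_nonneg _
    have hq0 : q0 v = Complex.normSq v.1 / nrm v := by
      rw [q0, sqrt_inv_sq hS]; ring
    have hq1 : q1 v = Complex.normSq v.2 / nrm v := by
      rw [q1, sqrt_inv_sq hS]; ring
    have hle0 : Complex.normSq v.1 ≤ nrm v := by unfold nrm; linarith
    have hle1 : Complex.normSq v.2 ≤ nrm v := by unfold nrm; linarith
    refine ⟨⟨?_, ?_⟩, ⟨?_, ?_⟩⟩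
    · rw [hq0]; exact div_nonneg h0 hS.le
    · rw [hq0]; exact (div_le_one hS).mpr hle0
    · rw [hq1]; exact div_nonneg h1 hS.le
    · rw [hq1]; exact (div_le_one hS).mpr hle1

lemma swap_preserves : MeasurePreserving (Prod.swap : ℂ × ℂ → ℂ × ℂ) γ γ := by
  constructor
  · exact measurable_swap
  · have hcoe : ⇑((MeasurableEquiv.prodComm : (ℂ × ℂ) ≃ᵐ (ℂ × ℂ))) = (Prod.swap : ℂ × ℂ → ℂ × ℂ) := rfl
    have hρ : ρ ∘ ⇑((MeasurableEquiv.prodComm : (ℂ × ℂ) ≃ᵐ (ℂ × ℂ))) = ρ := by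
      funext v
      simp only [Function.comp_apply, hcoe, ρ, Prod.fst_swap, Prod.snd_swap]
      ring
    have hvol : Measure.map (⇑((MeasurableEquiv.prodComm : (ℂ × ℂ) ≃ᵐ (ℂ × ℂ)))) (volume : Measure (ℂ × ℂ))
        = volume := by
      rw [hcoe, MeasureTheory.Measure.volume_eq_prod, Measure.prod_swap,
        ← MeasureTheory.Measure.volume_eq_prod]
    calc Measure.map Prod.swap γ
        = Measure.map (⇑((MeasurableEquiv.prodComm : (ℂ × ℂ) ≃ᵐ (ℂ × ℂ)))) (volume.withDensity
            (ρ ∘ ⇑((MeasurableEquiv.prodComm : (ℂ × ℂ) ≃ᵐ (ℂ × ℂ))))) := by rw [hρ, hcoe, γ]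
      _ = (Measure.map (⇑((MeasurableEquiv.prodComm : (ℂ × ℂ) ≃ᵐ (ℂ × ℂ)))) volume).withDensity ρ :=
          map_withDensity_equiv _ _ _ measurable_rho
      _ = γ := by rw [hvol, γ]

lemma integrable_q0 : Integrable q0 γ := by
  apply Integrable.mono' (integrable_const (1:ℝ)) measurable_q0.aestronglyMeasurable
  apply Filter.Eventually.of_forall
  intro v
  rw [Real.norm_eq_abs, _root_.abs_of_nonneg ((q_bound v).1.1)]
  exact (q_bound v).1.2

lemma integrable_q1 : Integrable q1 γ := by
  apply Integrable.mono' (integrable_const (1:ℝ)) measurable_q1.aestronglyMeasurable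
  apply Filter.Eventually.of_forall
  intro v
  rw [Real.norm_eq_abs, _root_.abs_of_nonneg ((q_bound v).2.1)]
  exact (q_bound v).2.2

lemma int_q1_half : ∫ v, q1 v ∂γ = 1 / 2 := by
  have hswap : ∫ v, q1 v ∂γ = ∫ v, q0 v ∂γ := by
    have h := swap_preserves.integral_comp
      ((MeasurableEquiv.prodComm : (ℂ × ℂ) ≃ᵐ (ℂ × ℂ))).measurableEmbedding q1
    have hcomp : ∀ v : ℂ × ℂ, q1 (Prod.swap v) = q0 v := by
      intro v
      simp only [q1, q0, Prod.fst_swap, Prod.snd_swap, nrm]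
      rw [add_comm]
    rw [← h]
    congr 1
    funext v
    exact hcomp v
  have hsum : ∫ v, (q0 v + q1 v) ∂γ = 1 := by
    have hae : (fun v => q0 v + q1 v) =ᵐ[γ] fun _ => (1:ℝ) := by
      have h0 : γ {v : ℂ × ℂ | ¬ v ≠ 0} = 0 := by
        have : {v : ℂ × ℂ | ¬ v ≠ 0} = ({0} : Set (ℂ × ℂ)) := by
          ext v; simp
        rw [this]
        exact gamma_zero_singleton
      have hne : ∀ᵐ v ∂γ, v ≠ 0 := by
        rw [ae_iff]
        exact h0
      filter_upwards [hne] with v hv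
      have hS : 0 < nrm v := nrm_pos hv
      rw [q0, q1, sqrt_inv_sq hS]
      have : (nrm v)⁻¹ * (Complex.normSq v.1 + Complex.normSq v.2) = 1 := by
        rw [show Complex.normSq v.1 + Complex.normSq v.2 = nrm v from rfl]
        exact inv_mul_cancel₀ hS.ne'
      linarith [this]
    rw [integral_congr_ae hae]
    simp
  rw [integral_add integrable_q0 integrable_q1, hswap] at hsum
  linarith [hsum]

lemma exp_half : ∫ v, ‖F v 0 1‖ ^ 2 ∂γ = 1 / 2 := by
  have : (fun v : ℂ × ℂ => ‖F v 0 1‖ ^ 2) = q1 := by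
    funext v
    rw [F01, Complex.sq_norm, Complex.normSq_conj, q1]
    simp only [nfn, Complex.normSq_mul, Complex.normSq_ofReal]
  rw [this]
  exact int_q1_half

end SUHaar

/-- If `U` is distributed according to the Haar probability measure on `SU(2)`
(viewed as a probability measure on `2×2` complex matrices, supported on `SU(2)`
and invariant under left translations by elements of `SU(2)`), then the squared
modulus of the off-diagonal entry `⟨+|U|−⟩` is uniformly distributed on `[0,1]`;
in particular its expectation is `1/2`. -/
theorem offdiagonal_entry_uniform_under_haar
    (μ : Measure (Matrix (Fin 2) (Fin 2) ℂ)) [IsProbabilityMeasure μ]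
    (hsupp : μ {A | A ∈ Matrix.specialUnitaryGroup (Fin 2) ℂ} = 1)
    (hinv : ∀ g ∈ Matrix.specialUnitaryGroup (Fin 2) ℂ,
      Measure.map (fun A => g * A) μ = μ) :
    (∀ b ∈ Set.Icc (0 : ℝ) 1,
      μ {A | ‖A 0 1‖ ^ 2 ≤ b} = ENNReal.ofReal b) ∧
    ∫ A, ‖A 0 1‖ ^ 2 ∂μ = 1 / 2 := by
  have hμν : μ = SUHaar.ν := SUHaar.mu_eq_nu μ hsupp hinv
  constructor
  · intro b hb
    obtain ⟨hb0, hb1⟩ := hb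
    have hsb : MeasurableSet {A : SUHaar.Mat | ‖A 0 1‖ ^ 2 ≤ b} :=
      measurableSet_le SUHaar.measurable_entry01sq measurable_const
    rw [hμν, SUHaar.ν, Measure.map_apply SUHaar.measurable_F hsb, SUHaar.F_pre hb0,
      SUHaar.gamma_cdf hb0 hb1]
  · rw [hμν, SUHaar.ν, integral_map SUHaar.measurable_F.aemeasurable
      SUHaar.measurable_entry01sq.aestronglyMeasurable]
    exact SUHaar.exp_half

end
end

section
/- Fix δ > 0 and an initial condition x_0 = (Z_0, ȳ_0, φ_0) ∈ D_{(−1+δ, 1−δ)}. For any φ* > φ_0 and any κ < δ/2, the first time τ_{φ*} = inf{t > 0 : φ_t = φ*} belongs to the set [ (φ*−φ_0)/(1+2κ/δ), (φ*−φ_0)/(1−2κ/δ) ] ∪ [ τ_{(−1+δ,1−δ)}, ∞ ]. -/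
open Real MeasureTheory ENNReal

noncomputable section

/-- First time (after `0`) at which a predicate on time holds, as an extended real. -/
def firstTime (p : ℝ → Prop) : ℝ≥0∞ :=
  ⨅ (t : ℝ) (_ : 0 < t ∧ p t), ENNReal.ofReal t

private lemma clock_stepA (γ κ Zt r c s : ℝ) (hγ : 0 < γ) (hκ : 0 < κ) (hZ : |Zt| < 1)
    (hr : 0 ≤ r) (hcs : c^2 + s^2 = 1) :
    |κ * (2 * Zt / (1 + γ^2) * r * (c + γ * s))| ≤ 2 * κ * r := by
  have hZ2 : Zt^2 ≤ 1 := by nlinarith [sq_abs Zt, abs_nonneg Zt, hZ.le]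
  have hg : (0:ℝ) < 1 + γ^2 := by positivity
  apply abs_le_of_sq_le_sq _ (by positivity)
  have key : (Zt * (c + γ*s))^2 ≤ (1+γ^2)^2 := by
    nlinarith [sq_nonneg (γ*c - s), sq_nonneg (c + γ*s), sq_nonneg Zt]
  have expand : (κ * (2 * Zt / (1 + γ^2) * r * (c + γ * s)))^2
      = 4 * κ^2 * r^2 * ((Zt * (c+γ*s))^2 / (1+γ^2)^2) := by
    field_simp; ring
  rw [expand]
  have : (Zt * (c+γ*s))^2 / (1+γ^2)^2 ≤ 1 := by
    rw [div_le_one (by positivity)]; exact key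
  nlinarith [sq_nonneg (κ*r), mul_pos hκ hκ]

private lemma clock_stepB (δ κ yt r w : ℝ) (hδ : 0 < δ) (hδ1 : δ < 1) (hκ : 0 < κ)
    (hκ2 : κ < δ/2) (hr : 0 ≤ r) (hr2 : r^2 = 1 - yt^2) (hw : |w| ≤ 2*κ*r)
    (hd1 : -1 + δ < yt + w) (hd2 : yt + w < 1 - δ) :
    δ * |yt| ≤ r := by
  by_contra hcon
  push_neg at hcon
  have habs := abs_le.mp hw
  have ha : |yt| < 1 - δ + δ * r := by
    cases abs_cases yt with
    | inl h => rw [h.1]; nlinarith [habs.1]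
    | inr h => rw [h.1]; nlinarith [habs.2]
  have ha0 : 0 ≤ |yt| := abs_nonneg yt
  have hsq : yt^2 = |yt|^2 := (sq_abs yt).symm
  set a := |yt|
  have h1 : a * (1 + δ) < 1 := by nlinarith
  have h2 : 1 < (1 + δ^2) * a^2 := by nlinarith
  nlinarith [sq_nonneg a, sq_nonneg (a*(1+δ))]

/-- While in the domain, the perturbation of the clock speed is at most `2κ/δ`. -/
private lemma clock_drift_bound (γ κ δ : ℝ) (hγ : 0 < γ) (hδ : 0 < δ) (hδ1 : δ < 1)
    (hκpos : 0 < κ) (hκ : κ < δ / 2)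
    (Zt yt c s : ℝ) (hZ : |Zt| < 1) (hy1 : -1 ≤ yt) (hy2 : yt ≤ 1)
    (hcs : c^2 + s^2 = 1)
    (hd1 : -1 + δ < yt + κ * (2 * Zt / (1 + γ ^ 2) * Real.sqrt (1 - yt ^ 2) * (c + γ * s)))
    (hd2 : yt + κ * (2 * Zt / (1 + γ ^ 2) * Real.sqrt (1 - yt ^ 2) * (c + γ * s)) < 1 - δ) :
    |2 * κ * Zt * (yt / Real.sqrt (1 - yt ^ 2)) * c| ≤ 2 * κ / δ := by
  have hy2' : (0:ℝ) ≤ 1 - yt^2 := by nlinarith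
  have hr : 0 ≤ Real.sqrt (1 - yt ^ 2) := Real.sqrt_nonneg _
  have hr2 : (Real.sqrt (1 - yt ^ 2))^2 = 1 - yt^2 := Real.sq_sqrt hy2'
  set r := Real.sqrt (1 - yt ^ 2)
  have hw := clock_stepA γ κ Zt r c s hγ hκpos hZ hr hcs
  have hB := clock_stepB δ κ yt r _ hδ hδ1 hκpos hκ hr hr2 hw hd1 hd2
  have hrpos : 0 < r := by
    rcases eq_or_lt_of_le hr with h0 | h0
    · exfalso
      have h1 : yt ^ 2 = 1 := by nlinarith
      have h2 : |yt| = 1 := by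
        have := sq_abs yt
        nlinarith [abs_nonneg yt, sq_nonneg (|yt| - 1), sq_nonneg (|yt| + 1)]
      rw [h2] at hB; nlinarith
    · exact h0
  have hyr : |yt| / r ≤ 1 / δ := by
    rw [div_le_div_iff₀ hrpos hδ]; linarith
  have hZ1 : |Zt| ≤ 1 := hZ.le
  have hc1 : |c| ≤ 1 :=
    abs_le_of_sq_le_sq (show c^2 ≤ 1^2 by nlinarith [sq_nonneg s]) one_pos.le
  calc |2 * κ * Zt * (yt / r) * c|
      = 2 * κ * |Zt| * (|yt| / r) * |c| := by
        rw [abs_mul, abs_mul, abs_mul, abs_div, abs_of_nonneg hr,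
          abs_of_nonneg (by positivity : (0:ℝ) ≤ 2*κ)]
    _ ≤ 2 * κ * 1 * (1/δ) * 1 := by
        apply mul_le_mul _ hc1 (abs_nonneg c) (by positivity)
        apply mul_le_mul _ hyr (by positivity) (by positivity)
        exact mul_le_mul_of_nonneg_left hZ1 (by positivity)
    _ = 2 * κ / δ := by ring

/-- Abstract clock estimate: if `φp` has derivative `1 - D t` with `|D t| ≤ c < 1`
as long as the system is in the domain, then the first hitting time of `φstar`
lies in the claimed interval, or comes after the exit time. -/
private lemma clock_abstract (φp : ℝ → ℝ) (φstar : ℝ)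
    (D : ℝ → ℝ)
    (hφ : ∀ t, HasDerivAt φp (1 - D t) t)
    (c : ℝ) (hc0 : 0 < c) (hc1 : c < 1)
    (dom : ℝ → Prop) (hdom0 : dom 0)
    (hD : ∀ t, dom t → |D t| ≤ c)
    (hφstar : φp 0 < φstar) :
    firstTime (fun t => φp t = φstar) ∈
      Set.Icc (ENNReal.ofReal ((φstar - φp 0) / (1 + c)))
              (ENNReal.ofReal ((φstar - φp 0) / (1 - c))) ∪
      Set.Ici (firstTime (fun t => ¬ dom t)) := by
  set τe := firstTime (fun t => ¬ dom t) with hτe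
  rcases le_or_gt τe (firstTime (fun t => φp t = φstar)) with h | h
  · exact Or.inr h
  · left
    rw [firstTime, iInf_lt_iff] at h
    obtain ⟨t0, h⟩ := h
    rw [iInf_lt_iff] at h
    obtain ⟨⟨ht0pos, ht0φ⟩, ht0lt⟩ := h
    have hφcont : Continuous φp :=
      continuous_iff_continuousAt.2 fun t => (hφ t).differentiableAt.continuousAt
    set K : Set ℝ := {t ∈ Set.Icc 0 t0 | φp t = φstar} with hK
    have hKclosed : IsClosed K :=
      (isClosed_Icc.inter (isClosed_eq hφcont continuous_const) :
        IsClosed (Set.Icc 0 t0 ∩ φp ⁻¹' {φstar}))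
    have hKne : K.Nonempty := ⟨t0, ⟨⟨ht0pos.le, le_refl _⟩, ht0φ⟩⟩
    have hKbdd : BddBelow K := ⟨0, fun x hx => hx.1.1⟩
    set s := sInf K with hs
    have hsK : s ∈ K := hKclosed.csInf_mem hKne hKbdd
    have hs0 : 0 ≤ s := hsK.1.1
    have hst0 : s ≤ t0 := hsK.1.2
    have hsφ : φp s = φstar := hsK.2
    have hspos : 0 < s := by
      rcases eq_or_lt_of_le hs0 with h0 | h0
      · exact absurd (h0 ▸ hsφ) (ne_of_lt hφstar)
      · exact h0
    have hsmin : ∀ t, 0 < t → φp t = φstar → s ≤ t := by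
      intro t ht hφt
      rcases le_or_gt t t0 with h' | h'
      · exact csInf_le hKbdd ⟨⟨ht.le, h'⟩, hφt⟩
      · linarith
    have hτφ : firstTime (fun t => φp t = φstar) = ENNReal.ofReal s := by
      apply le_antisymm
      · exact iInf_le_of_le s (iInf_le _ ⟨hspos, hsφ⟩)
      · exact le_iInf fun t => le_iInf fun ht => ENNReal.ofReal_le_ofReal (hsmin t ht.1 ht.2)
    have hdomIcc : ∀ u ∈ Set.Icc (0:ℝ) s, dom u := by
      intro u hu
      rcases eq_or_lt_of_le hu.1 with h0 | h0
      · exact h0 ▸ hdom0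
      · by_contra hc'
        have h1 : τe ≤ ENNReal.ofReal u :=
          iInf_le_of_le u (iInf_le _ ⟨h0, hc'⟩)
        have h2 : ENNReal.ofReal u ≤ ENNReal.ofReal t0 :=
          ENNReal.ofReal_le_ofReal (hu.2.trans hst0)
        exact absurd (h1.trans h2) (not_le.2 ht0lt)
    have hderiv : ∀ x ∈ Set.Icc (0:ℝ) s, 1 - c ≤ 1 - D x ∧ 1 - D x ≤ 1 + c := by
      intro x hx
      have := abs_le.mp (hD x (hdomIcc x hx))
      constructor <;> linarith [this.1, this.2]
    have hup : φstar - φp 0 ≤ (1 + c) * s := by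
      have hmono : MonotoneOn (fun t => (1 + c) * t - φp t) (Set.Icc 0 s) := by
        apply monotoneOn_of_deriv_nonneg (convex_Icc 0 s)
        · exact (Continuous.sub (continuous_const.mul continuous_id) hφcont).continuousOn
        · intro x hx
          exact ((hasDerivAt_id x).const_mul (1+c)
            |>.sub (hφ x)).differentiableAt.differentiableWithinAt
        · intro x hx
          rw [interior_Icc] at hx
          have hd : deriv (fun t => (1 + c) * t - φp t) x = (1 + c) * 1 - (1 - D x) :=
            (((hasDerivAt_id x).const_mul (1+c)).sub (hφ x)).deriv
          rw [hd]
          have := (hderiv x ⟨hx.1.le, hx.2.le⟩).2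
          linarith
      have := hmono (Set.left_mem_Icc.2 hs0) (Set.right_mem_Icc.2 hs0) hs0
      simp only [mul_zero] at this
      rw [hsφ] at this
      linarith
    have hlow : (1 - c) * s ≤ φstar - φp 0 := by
      have hmono : MonotoneOn (fun t => φp t - (1 - c) * t) (Set.Icc 0 s) := by
        apply monotoneOn_of_deriv_nonneg (convex_Icc 0 s)
        · exact (hφcont.sub (continuous_const.mul continuous_id)).continuousOn
        · intro x hx
          exact ((hφ x).sub
            ((hasDerivAt_id x).const_mul (1-c))).differentiableAt.differentiableWithinAt
        · intro x hx
          rw [interior_Icc] at hx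
          have hd : deriv (fun t => φp t - (1 - c) * t) x = (1 - D x) - (1 - c) * 1 :=
            ((hφ x).sub ((hasDerivAt_id x).const_mul (1-c))).deriv
          rw [hd]
          have := (hderiv x ⟨hx.1.le, hx.2.le⟩).1
          linarith
      have := hmono (Set.left_mem_Icc.2 hs0) (Set.right_mem_Icc.2 hs0) hs0
      simp only [mul_zero] at this
      rw [hsφ] at this
      linarith
    rw [hτφ]
    constructor
    · apply ENNReal.ofReal_le_ofReal
      rw [div_le_iff₀ (by linarith : (0:ℝ) < 1 + c)]
      linarith
    · apply ENNReal.ofReal_le_ofReal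
      rw [le_div_iff₀ (by linarith : (0:ℝ) < 1 - c)]
      linarith

/-- Lemma on the clock variable `φ_t`: as long as the process stays in
`D_{(−1+δ,1−δ)}`, `φ` moves with speed in `[1 − 2κ/δ, 1 + 2κ/δ]`, so the first
time `τ_{φ*}` when `φ_t = φ*` lies in
`[(φ*−φ₀)/(1+2κ/δ), (φ*−φ₀)/(1−2κ/δ)] ∪ [τ_{(−1+δ,1−δ)}, ∞]`. -/
theorem clock_time_estimate
    (γ κ δ φstar : ℝ) (hγ : 0 < γ) (hδ : 0 < δ) (hδ1 : δ < 1)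
    (hκpos : 0 < κ) (hκ : κ < δ / 2)
    (Z y φp : ℝ → ℝ) (hZc : Continuous Z)
    (hy : ∀ t, HasDerivAt y
      (2 * κ * Z t * Real.sqrt (1 - y t ^ 2) * Real.sin (φp t)) t)
    (hφ : ∀ t, HasDerivAt φp
      (1 - 2 * κ * Z t * (y t / Real.sqrt (1 - y t ^ 2)) * Real.cos (φp t)) t)
    (hybd : ∀ t, y t ∈ Set.Icc (-1 : ℝ) 1)
    (ybar : ℝ → ℝ)
    (hybar : ∀ t, ybar t = y t +
      κ * (2 * Z t / (1 + γ ^ 2) * Real.sqrt (1 - y t ^ 2) *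
        (Real.cos (φp t) + γ * Real.sin (φp t))))
    (hx₀ : |Z 0| < 1 ∧ ybar 0 ∈ Set.Ioo (-1 + δ) (1 - δ))
    (hφstar : φp 0 < φstar) :
    firstTime (fun t => φp t = φstar) ∈
      Set.Icc (ENNReal.ofReal ((φstar - φp 0) / (1 + 2 * κ / δ)))
              (ENNReal.ofReal ((φstar - φp 0) / (1 - 2 * κ / δ))) ∪
      Set.Ici (firstTime (fun t => ¬(|Z t| < 1 ∧ ybar t ∈ Set.Ioo (-1 + δ) (1 - δ)))) := by
  have hc0 : 0 < 2 * κ / δ := by positivity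
  have hc1 : 2 * κ / δ < 1 := by
    rw [div_lt_one hδ]; linarith
  apply clock_abstract φp φstar
    (fun t => 2 * κ * Z t * (y t / Real.sqrt (1 - y t ^ 2)) * Real.cos (φp t))
    hφ _ hc0 hc1
    (fun t => |Z t| < 1 ∧ ybar t ∈ Set.Ioo (-1 + δ) (1 - δ)) hx₀ _ hφstar
  intro t ht
  have hd := ht.2
  rw [hybar t] at hd
  exact clock_drift_bound γ κ δ hγ hδ hδ1 hκpos hκ (Z t) (y t)
    (Real.cos (φp t)) (Real.sin (φp t)) ht.1 (hybd t).1 (hybd t).2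
    (Real.cos_sq_add_sin_sq (φp t)) hd.1 hd.2

end
end
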